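/- Interpolation of A_1 norm functions: let ρ_0, ρ_1 be norm functions on R^d × F^n in the A_1 class with constants C_0, C_1, and 1 ≤ p ≤ ∞. Then the Minkowski functional ρ of the pointwise convex hull K(x) of {u : ρ_0*(x,u)^{1/p'} ρ_1(x,u)^{1/p} ≤ 1} is a norm function satisfying ρ(x,u) ≤ ρ_0*(x,u)^{1/p'} ρ_1(x,u)^{1/p} and ρ*(x,v) ≤ ρ_0(x,v)^{1/p'} ρ_1*(x,v)^{1/p}. -/

import Mathlib

open MeasureTheory ENNReal

variable {𝕜 : Type*} [RCLike 𝕜] {n : ℕ}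

/-- A subset of an `𝕜`-vector space is *symmetric* if it is closed under multiplication by
unimodular scalars. -/
def SymmSet (𝕜 : Type*) [RCLike 𝕜] {E : Type*} [SMul 𝕜 E] (K : Set E) : Prop :=
  ∀ c : 𝕜, ‖c‖ = 1 → ∀ x ∈ K, c • x ∈ K

/-- The smallest closed convex symmetric subset of `𝔽ⁿ` containing a given set. -/
def convK (𝕜 : Type*) [RCLike 𝕜] {n : ℕ} (S : Set (EuclideanSpace 𝕜 (Fin n))) :
    Set (EuclideanSpace 𝕜 (Fin n)) :=
  ⋂₀ {K | IsClosed K ∧ Convex ℝ K ∧ SymmSet 𝕜 K ∧ S ⊆ K}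

/-- An axis-parallel cube in `ℝᵈ`. -/
def IsCube (d : ℕ) (Q : Set (Fin d → ℝ)) : Prop :=
  ∃ (a : Fin d → ℝ) (r : ℝ), 0 < r ∧ Q = Set.univ.pi fun i => Set.Icc (a i) (a i + r)

/-- A *norm function* on `ℝᵈ × 𝔽ⁿ`: measurable in the first variable and a norm in the
second. -/
def IsNormFun (d : ℕ) (ρ : (Fin d → ℝ) → EuclideanSpace 𝕜 (Fin n) → ℝ) : Prop :=
  (∀ u, Measurable fun x => ρ x u) ∧
  ∀ x, (∀ u v, ρ x (u + v) ≤ ρ x u + ρ x v) ∧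
    (∀ (c : 𝕜) u, ρ x (c • u) = ‖c‖ * ρ x u) ∧
    (∀ u, ρ x u = 0 → u = 0)

/-- The pointwise dual `ρ*(x,v) = sup_{u ≠ 0} |u·v| / ρ(x,u)` of a norm function, with values
in `ℝ≥0∞`. -/
noncomputable def dualNormFun (d : ℕ) (ρ : (Fin d → ℝ) → EuclideanSpace 𝕜 (Fin n) → ℝ)
    (x : Fin d → ℝ) (v : EuclideanSpace 𝕜 (Fin n)) : ℝ≥0∞ :=
  ⨆ u : {u : EuclideanSpace 𝕜 (Fin n) // u ≠ 0},
    (‖(inner 𝕜 u.1 v : 𝕜)‖₊ : ℝ≥0∞) / ENNReal.ofReal (ρ x u.1)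

/-- The `A₁` condition for a norm function, with constant `C`. -/
def NormFunA1 (d : ℕ) (ρ : (Fin d → ℝ) → EuclideanSpace 𝕜 (Fin n) → ℝ) (C : ℝ) : Prop :=
  ∀ Q : Set (Fin d → ℝ), IsCube d Q → ∀ u : EuclideanSpace 𝕜 (Fin n),
    ∃ v : EuclideanSpace 𝕜 (Fin n), v ≠ 0 ∧
      (∫⁻ x in Q, ENNReal.ofReal (ρ x u) ∂volume) *
          essSup (fun x => dualNormFun d ρ x v) (volume.restrict Q) ≤
        ENNReal.ofReal C * (‖(inner 𝕜 u v : 𝕜)‖₊ : ℝ≥0∞) * volume Q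

/-- The pointwise convex hull set `K(x)` of
`{u : ρ₀*(x,u)^{1/p'} ρ₁(x,u)^{1/p} ≤ 1}`, where `q = p'`. -/
noncomputable def interpBody (d : ℕ)
    (ρ₀ ρ₁ : (Fin d → ℝ) → EuclideanSpace 𝕜 (Fin n) → ℝ) (p q : ℝ≥0∞) (x : Fin d → ℝ) :
    Set (EuclideanSpace 𝕜 (Fin n)) :=
  convK 𝕜 {u | (dualNormFun d ρ₀ x u) ^ (q⁻¹.toReal) *
    (ENNReal.ofReal (ρ₁ x u)) ^ (p⁻¹.toReal) ≤ 1}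

/-- The Minkowski functional of `interpBody`. -/
noncomputable def interpNormFun (d : ℕ)
    (ρ₀ ρ₁ : (Fin d → ℝ) → EuclideanSpace 𝕜 (Fin n) → ℝ) (p q : ℝ≥0∞)
    (x : Fin d → ℝ) (u : EuclideanSpace 𝕜 (Fin n)) : ℝ :=
  sInf {t : ℝ | 0 < t ∧ t⁻¹ • u ∈ interpBody d ρ₀ ρ₁ p q x}


open scoped NNReal

theorem ofReal_norm_eq_coe_nnnorm {E : Type*} [SeminormedAddCommGroup E] (a : E) :
    ENNReal.ofReal ‖a‖ = (‖a‖₊ : ℝ≥0∞) := ENNReal.ofReal_eq_coe_nnreal _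


def IsNorm (N : EuclideanSpace 𝕜 (Fin n) → ℝ) : Prop :=
  (∀ u v, N (u + v) ≤ N u + N v) ∧ (∀ (c : 𝕜) u, N (c • u) = ‖c‖ * N u) ∧
    (∀ u, N u = 0 → u = 0)

namespace IsNorm
variable {N : EuclideanSpace 𝕜 (Fin n) → ℝ} (h : IsNorm N)
include h

theorem map_zero : N 0 = 0 := by
  have := h.2.1 (0 : 𝕜) 0
  simpa using this

theorem neg (u) : N (-u) = N u := by
  have := h.2.1 (-1 : 𝕜) u
  simpa using this

theorem nonneg (u) : 0 ≤ N u := by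
  have h2 := h.1 u (-u)
  rw [add_neg_cancel, h.map_zero, h.neg] at h2
  linarith

theorem pos {u} (hu : u ≠ 0) : 0 < N u :=
  (h.nonneg u).lt_of_ne' fun h0 => hu (h.2.2 u h0)

theorem abs_sub_le (u v) : |N u - N v| ≤ N (u - v) := by
  rw [abs_sub_le_iff]
  constructor
  · have := h.1 (u - v) v; simpa using this
  · have := h.1 (v - u) u
    rw [sub_add_cancel] at this
    have h2 : N (v - u) = N (u - v) := by
      rw [← h.neg (u - v)]; congr 1; abel
    linarith [this, h2]

theorem smul_real (t : ℝ) (u) : N (t • u) = |t| * N u := by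
  rw [RCLike.real_smul_eq_coe_smul (K := 𝕜), h.2.1]
  simp

theorem exists_upper : ∃ C : ℝ, 0 < C ∧ ∀ u, N u ≤ C * ‖u‖ := by
  classical
  set C : ℝ := (∑ i : Fin n, N (EuclideanSpace.single i 1)) + 1 with hC
  have hCpos : 0 < C := by
    have : 0 ≤ ∑ i : Fin n, N (EuclideanSpace.single i 1) :=
      Finset.sum_nonneg fun i _ => h.nonneg _
    linarith
  refine ⟨C, hCpos, fun u => ?_⟩
  have hrep : u = ∑ i : Fin n, u i • EuclideanSpace.single i (1 : 𝕜) := by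
    ext j
    rw [WithLp.ofLp_sum, Finset.sum_apply]
    simp [EuclideanSpace.single_apply]
  have hsum : ∀ (s : Finset (Fin n)),
      N (∑ i ∈ s, u i • EuclideanSpace.single i (1 : 𝕜)) ≤
        ∑ i ∈ s, ‖u i‖ * N (EuclideanSpace.single i 1) := by
    intro s
    induction s using Finset.induction with
    | empty => simp [h.map_zero]
    | insert a s hni ih =>
      rw [Finset.sum_insert hni, Finset.sum_insert hni]
      refine (h.1 _ _).trans ?_
      rw [h.2.1]
      gcongr
  have hcoord : ∀ i, ‖u i‖ ≤ ‖u‖ := by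
    intro i
    have h1 : (inner 𝕜 (EuclideanSpace.single i (1 : 𝕜)) u : 𝕜) = u i := by
      simp [EuclideanSpace.inner_single_left]
    calc ‖u i‖ = ‖(inner 𝕜 (EuclideanSpace.single i (1 : 𝕜)) u : 𝕜)‖ := by rw [h1]
      _ ≤ ‖EuclideanSpace.single i (1 : 𝕜)‖ * ‖u‖ := norm_inner_le_norm _ _
      _ = ‖u‖ := by rw [EuclideanSpace.norm_single]; simp
  calc N u ≤ ∑ i : Fin n, ‖u i‖ * N (EuclideanSpace.single i 1) := by
        conv_lhs => rw [hrep]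
        exact hsum Finset.univ
    _ ≤ ∑ i : Fin n, ‖u‖ * N (EuclideanSpace.single i 1) := by
        gcongr with i
        · exact h.nonneg _
        · exact hcoord i
    _ = (∑ i : Fin n, N (EuclideanSpace.single i 1)) * ‖u‖ := by
        rw [← Finset.mul_sum, mul_comm]
    _ ≤ C * ‖u‖ := by
        have := norm_nonneg u; nlinarith

end IsNorm

namespace IsNorm
variable {N : EuclideanSpace 𝕜 (Fin n) → ℝ} (h : IsNorm N)
include h

theorem continuous : Continuous N := by
  obtain ⟨C, hC, hle⟩ := h.exists_upper
  rw [Metric.continuous_iff]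
  intro u ε hε
  refine ⟨ε / C, by positivity, fun v hv => ?_⟩
  rw [Real.dist_eq]
  calc |N v - N u| ≤ N (v - u) := h.abs_sub_le v u
    _ ≤ C * ‖v - u‖ := hle _
    _ < C * (ε / C) := by
        have : ‖v - u‖ < ε / C := by rwa [dist_eq_norm] at hv
        exact mul_lt_mul_of_pos_left this hC
    _ = ε := by field_simp

theorem exists_lower : ∃ m : ℝ, 0 < m ∧ ∀ u, m * ‖u‖ ≤ N u := by
  rcases subsingleton_or_nontrivial (EuclideanSpace 𝕜 (Fin n)) with hs | hnt
  · exact ⟨1, one_pos, fun u => by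
      rw [Subsingleton.elim u 0]; simp [h.map_zero]⟩
  · have hsph : IsCompact (Metric.sphere (0 : EuclideanSpace 𝕜 (Fin n)) 1) :=
      isCompact_sphere _ _
    have hne : (Metric.sphere (0 : EuclideanSpace 𝕜 (Fin n)) 1).Nonempty :=
      NormedSpace.sphere_nonempty.2 zero_le_one
    obtain ⟨u₀, hu₀mem, hu₀min⟩ := hsph.exists_isMinOn hne h.continuous.continuousOn
    have hu₀ : u₀ ≠ 0 := by
      intro h0
      rw [mem_sphere_zero_iff_norm, h0] at hu₀mem
      simpa using hu₀mem
    refine ⟨N u₀, h.pos hu₀, fun u => ?_⟩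
    rcases eq_or_ne u 0 with rfl | hu
    · simp [h.map_zero]
    · have hnu : (0:ℝ) < ‖u‖ := norm_pos_iff.2 hu
      have hmem : ‖u‖⁻¹ • u ∈ Metric.sphere (0 : EuclideanSpace 𝕜 (Fin n)) 1 := by
        rw [mem_sphere_zero_iff_norm, norm_smul]
        simp [abs_of_pos (inv_pos.2 hnu), inv_mul_cancel₀ hnu.ne']
      have := hu₀min hmem
      simp only [Set.mem_setOf_eq, h.smul_real] at this
      simp only [abs_of_pos (inv_pos.2 hnu)] at this
      -- this : N u₀ ≤ ‖u‖⁻¹ * N u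
      calc N u₀ * ‖u‖ ≤ (‖u‖⁻¹ * N u) * ‖u‖ := by
            exact mul_le_mul_of_nonneg_right this hnu.le
        _ = N u := by field_simp
end IsNorm

/-- The dual functional of an `ℝ≥0∞`-valued functional. -/
noncomputable def edual (φ : EuclideanSpace 𝕜 (Fin n) → ℝ≥0∞)
    (v : EuclideanSpace 𝕜 (Fin n)) : ℝ≥0∞ :=
  ⨆ u : {u : EuclideanSpace 𝕜 (Fin n) // u ≠ 0},
    (‖(inner 𝕜 u.1 v : 𝕜)‖₊ : ℝ≥0∞) / φ u.1

theorem dualNormFun_eq_edual (d : ℕ) (ρ : (Fin d → ℝ) → EuclideanSpace 𝕜 (Fin n) → ℝ)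
    (x : Fin d → ℝ) : dualNormFun d ρ x = edual (fun u => ENNReal.ofReal (ρ x u)) := rfl

/-- Comparability with the Euclidean norm, from above and below. -/
def Good (φ : EuclideanSpace 𝕜 (Fin n) → ℝ≥0∞) : Prop :=
  (∃ c : ℝ≥0, 0 < c ∧ ∀ u, (c * ‖u‖₊ : ℝ≥0∞) ≤ φ u) ∧
  ∃ C : ℝ≥0, 0 < C ∧ ∀ u, φ u ≤ (C * ‖u‖₊ : ℝ≥0∞)

namespace Good
variable {φ : EuclideanSpace 𝕜 (Fin n) → ℝ≥0∞} (h : Good φ)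
include h

theorem ne_top (u) : φ u ≠ ∞ := by
  obtain ⟨C, -, hC⟩ := h.2
  exact ((hC u).trans_lt (by finiteness)).ne

theorem pos {u} (hu : u ≠ 0) : 0 < φ u := by
  obtain ⟨c, hc, hlow⟩ := h.1
  refine lt_of_lt_of_le ?_ (hlow u)
  have h1 : ‖u‖₊ ≠ 0 := by simpa using hu
  exact ENNReal.mul_pos (by exact_mod_cast hc.ne') (by exact_mod_cast h1)

theorem ne_zero {u} (hu : u ≠ 0) : φ u ≠ 0 := (h.pos hu).ne'

end Good

theorem isNorm_good {N : EuclideanSpace 𝕜 (Fin n) → ℝ} (h : IsNorm N) :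
    Good (fun u => ENNReal.ofReal (N u)) := by
  obtain ⟨m, hm, hlow⟩ := h.exists_lower
  obtain ⟨C, hC, hup⟩ := h.exists_upper
  constructor
  · refine ⟨m.toNNReal, Real.toNNReal_pos.2 hm, fun u => ?_⟩
    calc (m.toNNReal * ‖u‖₊ : ℝ≥0∞) = ENNReal.ofReal (m * ‖u‖) := by
          rw [ENNReal.ofReal_mul hm.le, ofReal_norm_eq_coe_nnnorm]; rfl
      _ ≤ ENNReal.ofReal (N u) := ENNReal.ofReal_le_ofReal (hlow u)
  · refine ⟨C.toNNReal, Real.toNNReal_pos.2 hC, fun u => ?_⟩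
    calc ENNReal.ofReal (N u) ≤ ENNReal.ofReal (C * ‖u‖) := ENNReal.ofReal_le_ofReal (hup u)
      _ = (C.toNNReal * ‖u‖₊ : ℝ≥0∞) := by
          rw [ENNReal.ofReal_mul hC.le, ofReal_norm_eq_coe_nnnorm]; rfl

section edual
variable {φ : EuclideanSpace 𝕜 (Fin n) → ℝ≥0∞}

theorem le_edual {u : EuclideanSpace 𝕜 (Fin n)} (hu : u ≠ 0) (v) :
    (‖(inner 𝕜 u v : 𝕜)‖₊ : ℝ≥0∞) / φ u ≤ edual φ v :=
  le_iSup (fun w : {w : EuclideanSpace 𝕜 (Fin n) // w ≠ 0} =>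
    (‖(inner 𝕜 w.1 v : 𝕜)‖₊ : ℝ≥0∞) / φ w.1) ⟨u, hu⟩

/-- The fundamental pairing inequality. -/
theorem pairing_le (h : Good φ) (u v : EuclideanSpace 𝕜 (Fin n)) :
    (‖(inner 𝕜 u v : 𝕜)‖₊ : ℝ≥0∞) ≤ φ u * edual φ v := by
  rcases eq_or_ne u 0 with rfl | hu
  · simp
  · have h1 := le_edual (φ := φ) hu v
    rw [ENNReal.div_le_iff (h.ne_zero hu) (h.ne_top u)] at h1
    calc (‖(inner 𝕜 u v : 𝕜)‖₊ : ℝ≥0∞) ≤ edual φ v * φ u := h1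
      _ = φ u * edual φ v := mul_comm _ _

theorem edual_good (h : Good φ) : Good (edual φ) := by
  obtain ⟨c, hc, hlow⟩ := h.1
  obtain ⟨C, hC, hup⟩ := h.2
  constructor
  · refine ⟨C⁻¹, by positivity, fun v => ?_⟩
    rcases eq_or_ne v 0 with rfl | hv
    · simp
    · refine le_trans ?_ (le_edual hv v)
      have hinner : (‖(inner 𝕜 v v : 𝕜)‖₊ : ℝ≥0∞) = (‖v‖₊ : ℝ≥0∞) * ‖v‖₊ := by
        rw [inner_self_eq_norm_sq_to_K, nnnorm_pow, sq, ENNReal.coe_mul]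
        have h3 : ‖((‖v‖ : ℝ) : 𝕜)‖₊ = ‖v‖₊ := by
          apply NNReal.coe_injective
          simp [RCLike.norm_ofReal]
        rw [h3]
      rw [hinner, ENNReal.le_div_iff_mul_le (Or.inl (h.ne_zero hv)) (Or.inl (h.ne_top v))]
      calc (C⁻¹ * ‖v‖₊ : ℝ≥0∞) * φ v ≤ (C⁻¹ * ‖v‖₊ : ℝ≥0∞) * (C * ‖v‖₊) := by
            gcongr; exact hup v
        _ = ((C⁻¹ * C : ℝ≥0) : ℝ≥0∞) * (‖v‖₊ * ‖v‖₊) := by push_cast; ring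
        _ = (‖v‖₊ : ℝ≥0∞) * ‖v‖₊ := by rw [inv_mul_cancel₀ hC.ne']; simp
  · refine ⟨c⁻¹, by positivity, fun v => ?_⟩
    refine iSup_le fun ⟨u, hu⟩ => ?_
    have hnum : (‖(inner 𝕜 u v : 𝕜)‖₊ : ℝ≥0∞) ≤ (‖u‖₊ : ℝ≥0∞) * ‖v‖₊ := by
      rw [← ENNReal.coe_mul]
      exact_mod_cast nnnorm_inner_le_nnnorm (𝕜 := 𝕜) u v
    calc (‖(inner 𝕜 u v : 𝕜)‖₊ : ℝ≥0∞) / φ u ≤ ((‖u‖₊ : ℝ≥0∞) * ‖v‖₊) / ((c : ℝ≥0∞) * ‖u‖₊) :=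
          ENNReal.div_le_div hnum (hlow u)
      _ = (c⁻¹ * ‖v‖₊ : ℝ≥0∞) := by
          rw [ENNReal.div_eq_inv_mul, ENNReal.mul_inv (Or.inl (by exact_mod_cast hc.ne'))
            (Or.inl coe_ne_top)]
          have hu' : (‖u‖₊ : ℝ≥0∞) ≠ 0 := by simpa using hu
          calc (c : ℝ≥0∞)⁻¹ * (‖u‖₊ : ℝ≥0∞)⁻¹ * ((‖u‖₊ : ℝ≥0∞) * ‖v‖₊)
              = (c : ℝ≥0∞)⁻¹ * ((‖u‖₊ : ℝ≥0∞)⁻¹ * ‖u‖₊) * ‖v‖₊ := by ring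
            _ = (c : ℝ≥0∞)⁻¹ * ‖v‖₊ := by
                rw [ENNReal.inv_mul_cancel hu' coe_ne_top]; ring
            _ = (c⁻¹ * ‖v‖₊ : ℝ≥0∞) := by rw [ENNReal.coe_inv hc.ne']

theorem edual_add_le (v w : EuclideanSpace 𝕜 (Fin n)) :
    edual φ (v + w) ≤ edual φ v + edual φ w := by
  refine iSup_le fun ⟨u, hu⟩ => ?_
  have h1 : (‖(inner 𝕜 u (v + w) : 𝕜)‖₊ : ℝ≥0∞) ≤ (‖(inner 𝕜 u v : 𝕜)‖₊ : ℝ≥0∞) + ‖(inner 𝕜 u w : 𝕜)‖₊ := by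
    rw [inner_add_right]
    exact_mod_cast nnnorm_add_le _ _
  calc (‖(inner 𝕜 u (v + w) : 𝕜)‖₊ : ℝ≥0∞) / φ u
      ≤ ((‖(inner 𝕜 u v : 𝕜)‖₊ : ℝ≥0∞) + ‖(inner 𝕜 u w : 𝕜)‖₊) / φ u := ENNReal.div_le_div h1 le_rfl
    _ = (‖(inner 𝕜 u v : 𝕜)‖₊ : ℝ≥0∞) / φ u + (‖(inner 𝕜 u w : 𝕜)‖₊ : ℝ≥0∞) / φ u :=
        ENNReal.add_div
    _ ≤ edual φ v + edual φ w := add_le_add (le_edual hu v) (le_edual hu w)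

theorem edual_smul (c : 𝕜) (v : EuclideanSpace 𝕜 (Fin n)) :
    edual φ (c • v) = (‖c‖₊ : ℝ≥0∞) * edual φ v := by
  simp only [edual]
  rw [ENNReal.mul_iSup]
  congr 1
  ext ⟨u, hu⟩
  rw [inner_smul_right]
  rw [nnnorm_mul, ENNReal.coe_mul, mul_div_assoc]

theorem edual_smul_real {t : ℝ} (v : EuclideanSpace 𝕜 (Fin n)) :
    edual φ (t • v) = ENNReal.ofReal |t| * edual φ v := by
  rw [RCLike.real_smul_eq_coe_smul (K := 𝕜), edual_smul]
  congr 1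
  rw [← ofReal_norm_eq_coe_nnnorm, RCLike.norm_ofReal]

end edual

section edual2
variable {φ : EuclideanSpace 𝕜 (Fin n) → ℝ≥0∞}

theorem edual_neg (v : EuclideanSpace 𝕜 (Fin n)) : edual φ (-v) = edual φ v := by
  have := edual_smul (φ := φ) (-1 : 𝕜) v
  simpa using this

theorem edual_continuous (h : Good φ) : Continuous (edual φ) := by
  obtain ⟨c, hc, hlow⟩ := (edual_good h).2
  have key : ∀ v w : EuclideanSpace 𝕜 (Fin n),
      edual φ v ≤ edual φ w + (c : ℝ≥0∞) * ‖v - w‖₊ := by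
    intro v w
    calc edual φ v = edual φ (w + (v - w)) := by rw [add_sub_cancel]
      _ ≤ edual φ w + edual φ (v - w) := edual_add_le _ _
      _ ≤ edual φ w + (c : ℝ≥0∞) * ‖v - w‖₊ := add_le_add le_rfl (hlow _)
  -- real-valued version is Lipschitz
  have hfin : ∀ v, edual φ v ≠ ∞ := (edual_good h).ne_top
  have hlip : ∀ v w : EuclideanSpace 𝕜 (Fin n),
      |(edual φ v).toReal - (edual φ w).toReal| ≤ (c : ℝ) * ‖v - w‖ := by
    intro v w
    rw [abs_sub_le_iff]
    constructor
    · have := key v w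
      have h2 : (edual φ v).toReal ≤ (edual φ w).toReal + (c : ℝ) * ‖v - w‖ := by
        have h3 := ENNReal.toReal_mono (by
          refine ENNReal.add_ne_top.2 ⟨hfin w, ?_⟩
          exact ENNReal.mul_ne_top coe_ne_top coe_ne_top) this
        rw [ENNReal.toReal_add (hfin w) (ENNReal.mul_ne_top coe_ne_top coe_ne_top)] at h3
        simpa [ENNReal.toReal_mul] using h3
      linarith
    · have := key w v
      have h2 : (edual φ w).toReal ≤ (edual φ v).toReal + (c : ℝ) * ‖w - v‖ := by
        have h3 := ENNReal.toReal_mono (by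
          refine ENNReal.add_ne_top.2 ⟨hfin v, ?_⟩
          exact ENNReal.mul_ne_top coe_ne_top coe_ne_top) this
        rw [ENNReal.toReal_add (hfin v) (ENNReal.mul_ne_top coe_ne_top coe_ne_top)] at h3
        simpa [ENNReal.toReal_mul] using h3
      rw [norm_sub_rev] at h2
      linarith
  have hcontR : Continuous fun v => (edual φ v).toReal := by
    rw [Metric.continuous_iff]
    intro v ε hε
    refine ⟨ε / (c + 1), by positivity, fun w hw => ?_⟩
    rw [Real.dist_eq]
    calc |(edual φ w).toReal - (edual φ v).toReal| ≤ (c : ℝ) * ‖w - v‖ := hlip w v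
      _ ≤ (c : ℝ) * dist w v := by rw [dist_eq_norm]
      _ < (c + 1) * (ε / (c + 1)) := by
          have hc1 : (0:ℝ) < (c:ℝ) + 1 := by positivity
          have : dist w v < ε / ((c:ℝ) + 1) := hw
          nlinarith [dist_nonneg (x := w) (y := v), c.coe_nonneg]
      _ = ε := by field_simp
  have : (edual φ) = fun v => ENNReal.ofReal ((edual φ v).toReal) := by
    funext v
    rw [ENNReal.ofReal_toReal (hfin v)]
  rw [this]
  exact ENNReal.continuous_ofReal.comp hcontR

end edual2

/-- Reduce an `iSup` over all nonzero vectors to one over a dense set of nonzero vectors. -/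
theorem iSup_eq_iSup_dense {g : EuclideanSpace 𝕜 (Fin n) → ℝ≥0∞}
    (hg : ∀ u : EuclideanSpace 𝕜 (Fin n), u ≠ 0 → ContinuousAt g u)
    {D : Set {u : EuclideanSpace 𝕜 (Fin n) // u ≠ 0}} (hD : Dense D) :
    ⨆ u : {u : EuclideanSpace 𝕜 (Fin n) // u ≠ 0}, g u.1 = ⨆ u : D, g u.1.1 := by
  refine le_antisymm (iSup_le fun u => ?_) (iSup_le fun u =>
    le_iSup (fun w : {u : EuclideanSpace 𝕜 (Fin n) // u ≠ 0} => g w.1) u.1)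
  obtain ⟨xs, hxs, hlim⟩ := mem_closure_iff_seq_limit.1 (hD u)
  have hlim' : Filter.Tendsto (fun k => (xs k).1) Filter.atTop (nhds u.1) :=
    (continuous_subtype_val.tendsto u).comp hlim
  have hglim : Filter.Tendsto (fun k => g (xs k).1) Filter.atTop (nhds (g u.1)) :=
    (hg u.1 u.2).tendsto.comp hlim'
  refine le_of_tendsto hglim (Filter.Eventually.of_forall fun k => ?_)
  exact le_iSup (fun w : D => g w.1.1) ⟨xs k, hxs k⟩

theorem measurable_edual {α : Type*} [MeasurableSpace α]
    (Φ : α → EuclideanSpace 𝕜 (Fin n) → ℝ≥0∞)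
    (hmeas : ∀ u, Measurable fun x => Φ x u)
    (hgood : ∀ x, Good (Φ x))
    (hcont : ∀ x, ∀ u : EuclideanSpace 𝕜 (Fin n), u ≠ 0 → ContinuousAt (Φ x) u)
    (v : EuclideanSpace 𝕜 (Fin n)) : Measurable fun x => edual (Φ x) v := by
  obtain ⟨D, hDc, hDd⟩ :=
    TopologicalSpace.exists_countable_dense {u : EuclideanSpace 𝕜 (Fin n) // u ≠ 0}
  have hrw : (fun x => edual (Φ x) v) =
      fun x => ⨆ u : D, (‖(inner 𝕜 u.1.1 v : 𝕜)‖₊ : ℝ≥0∞) / Φ x u.1.1 := by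
    funext x
    refine iSup_eq_iSup_dense (g := fun u => (‖(inner 𝕜 u v : 𝕜)‖₊ : ℝ≥0∞) / Φ x u) ?_ hDd
    intro u hu
    have hnum : ContinuousAt (fun u : EuclideanSpace 𝕜 (Fin n) =>
        (‖(inner 𝕜 u v : 𝕜)‖₊ : ℝ≥0∞)) u := by
      refine Continuous.continuousAt ?_
      exact ENNReal.continuous_coe.comp ((Continuous.inner continuous_id continuous_const).nnnorm)
    refine ENNReal.Tendsto.div hnum ?_ (hcont x u hu) ?_
    · exact Or.inr ((hgood x).ne_zero hu)
    · exact Or.inl ((hgood x).ne_top u)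
  rw [hrw]
  have : Countable D := hDc.to_subtype
  exact Measurable.iSup fun u => (Measurable.div measurable_const (hmeas u.1.1))

/-- The interpolated functional `φ(w) = ρ₀*(w)^r · ρ₁(w)^s`. -/
noncomputable def phiI (N₀ N₁ : EuclideanSpace 𝕜 (Fin n) → ℝ) (r s : ℝ)
    (w : EuclideanSpace 𝕜 (Fin n)) : ℝ≥0∞ :=
  (edual (fun u => ENNReal.ofReal (N₀ u)) w) ^ r * (ENNReal.ofReal (N₁ w)) ^ s

section phiI
variable {N₀ N₁ : EuclideanSpace 𝕜 (Fin n) → ℝ} {r s : ℝ}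

theorem zero_rpow_mul_zero_rpow (hr : 0 ≤ r) (hs : 0 ≤ s) (hrs : r + s = 1) :
    (0 : ℝ≥0∞) ^ r * (0 : ℝ≥0∞) ^ s = 0 := by
  rcases hr.eq_or_lt with rfl | hr'
  · rw [ENNReal.rpow_zero, one_mul, ENNReal.zero_rpow_of_pos (by linarith)]
  · rw [ENNReal.zero_rpow_of_pos hr', zero_mul]

theorem phiI_zero (hN₀ : IsNorm N₀) (hN₁ : IsNorm N₁) (hr : 0 ≤ r) (hs : 0 ≤ s)
    (hrs : r + s = 1) : phiI N₀ N₁ r s 0 = 0 := by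
  have h0 : edual (fun u => ENNReal.ofReal (N₀ u)) (0 : EuclideanSpace 𝕜 (Fin n)) = 0 := by
    refine le_antisymm ?_ (zero_le')
    have := (edual_good (isNorm_good hN₀)).2
    obtain ⟨C, -, hup⟩ := this
    simpa using hup 0
  rw [phiI, h0, hN₁.map_zero]
  simpa using zero_rpow_mul_zero_rpow hr hs hrs

theorem phiI_good (hN₀ : IsNorm N₀) (hN₁ : IsNorm N₁) (hr : 0 ≤ r) (hs : 0 ≤ s)
    (hrs : r + s = 1) : Good (phiI N₀ N₁ r s) := by
  obtain ⟨c₀, hc₀, hlow₀⟩ := (edual_good (isNorm_good hN₀)).1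
  obtain ⟨c₁, hc₁, hlow₁⟩ := (isNorm_good hN₁).1
  obtain ⟨C₀, hC₀, hup₀⟩ := (edual_good (isNorm_good hN₀)).2
  obtain ⟨C₁, hC₁, hup₁⟩ := (isNorm_good hN₁).2
  have hnn : ∀ w : EuclideanSpace 𝕜 (Fin n), w ≠ 0 → ((‖w‖₊ : ℝ≥0∞) ^ r) * ((‖w‖₊ : ℝ≥0∞) ^ s)
      = (‖w‖₊ : ℝ≥0∞) := by
    intro w hw
    rw [← ENNReal.rpow_add r s (by simpa using hw) coe_ne_top, hrs, ENNReal.rpow_one]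
  constructor
  · refine ⟨c₀ ^ r * c₁ ^ s, mul_pos (NNReal.rpow_pos hc₀) (NNReal.rpow_pos hc₁), fun w => ?_⟩
    rcases eq_or_ne w 0 with rfl | hw
    · simp
    · calc ((c₀ ^ r * c₁ ^ s : ℝ≥0) * ‖w‖₊ : ℝ≥0∞)
          = ((c₀ : ℝ≥0∞) * ‖w‖₊) ^ r * ((c₁ : ℝ≥0∞) * ‖w‖₊) ^ s := by
            rw [ENNReal.mul_rpow_of_nonneg _ _ hr, ENNReal.mul_rpow_of_nonneg _ _ hs]
            rw [ENNReal.coe_mul]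
            push_cast [ENNReal.coe_rpow_of_nonneg _ hr, ENNReal.coe_rpow_of_nonneg _ hs]
            calc (c₀ : ℝ≥0∞) ^ r * (c₁ : ℝ≥0∞) ^ s * ‖w‖₊
                = (c₀ : ℝ≥0∞) ^ r * (c₁ : ℝ≥0∞) ^ s * ((‖w‖₊ : ℝ≥0∞) ^ r * (‖w‖₊ : ℝ≥0∞) ^ s) := by
                  rw [hnn w hw]
              _ = (c₀ : ℝ≥0∞) ^ r * (‖w‖₊ : ℝ≥0∞) ^ r * ((c₁ : ℝ≥0∞) ^ s * (‖w‖₊ : ℝ≥0∞) ^ s) := by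
                  ring
        _ ≤ phiI N₀ N₁ r s w := by
            rw [phiI]
            gcongr
            · exact hlow₀ w
            · exact hlow₁ w
  · refine ⟨C₀ ^ r * C₁ ^ s, mul_pos (NNReal.rpow_pos hC₀) (NNReal.rpow_pos hC₁), fun w => ?_⟩
    rcases eq_or_ne w 0 with rfl | hw
    · rw [phiI_zero hN₀ hN₁ hr hs hrs]; exact zero_le'
    · calc phiI N₀ N₁ r s w
          ≤ ((C₀ : ℝ≥0∞) * ‖w‖₊) ^ r * ((C₁ : ℝ≥0∞) * ‖w‖₊) ^ s := by
            rw [phiI]; gcongr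
            · exact hup₀ w
            · exact hup₁ w
        _ = ((C₀ ^ r * C₁ ^ s : ℝ≥0) * ‖w‖₊ : ℝ≥0∞) := by
            rw [ENNReal.mul_rpow_of_nonneg _ _ hr, ENNReal.mul_rpow_of_nonneg _ _ hs]
            rw [ENNReal.coe_mul]
            push_cast [ENNReal.coe_rpow_of_nonneg _ hr, ENNReal.coe_rpow_of_nonneg _ hs]
            calc (C₀ : ℝ≥0∞) ^ r * (‖w‖₊ : ℝ≥0∞) ^ r * ((C₁ : ℝ≥0∞) ^ s * (‖w‖₊ : ℝ≥0∞) ^ s)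
                = (C₀ : ℝ≥0∞) ^ r * (C₁ : ℝ≥0∞) ^ s * ((‖w‖₊ : ℝ≥0∞) ^ r * (‖w‖₊ : ℝ≥0∞) ^ s) := by
                  ring
              _ = (C₀ : ℝ≥0∞) ^ r * (C₁ : ℝ≥0∞) ^ s * ‖w‖₊ := by rw [hnn w hw]

theorem phiI_continuousAt (hN₀ : IsNorm N₀) (hN₁ : IsNorm N₁) (hr : 0 ≤ r) (hs : 0 ≤ s)
    (hrs : r + s = 1) {w : EuclideanSpace 𝕜 (Fin n)} (hw : w ≠ 0) :
    ContinuousAt (phiI N₀ N₁ r s) w := by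
  have hg := phiI_good hN₀ hN₁ hr hs hrs
  have h₀ : ContinuousAt (fun w : EuclideanSpace 𝕜 (Fin n) =>
      (edual (fun u => ENNReal.ofReal (N₀ u)) w) ^ r) w :=
    (ENNReal.continuous_rpow_const.comp (edual_continuous (isNorm_good hN₀))).continuousAt
  have h₁ : ContinuousAt (fun w : EuclideanSpace 𝕜 (Fin n) =>
      (ENNReal.ofReal (N₁ w)) ^ s) w :=
    (ENNReal.continuous_rpow_const.comp
      (ENNReal.continuous_ofReal.comp hN₁.continuous)).continuousAt
  have hfin : (edual (fun u => ENNReal.ofReal (N₀ u)) w) ^ r ≠ ∞ := by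
    have := (edual_good (isNorm_good hN₀)).ne_top w
    exact ENNReal.rpow_ne_top_of_nonneg hr this
  have hbfin : (ENNReal.ofReal (N₁ w)) ^ s ≠ ∞ :=
    ENNReal.rpow_ne_top_of_nonneg hs ENNReal.ofReal_ne_top
  exact ENNReal.Tendsto.mul h₀ (Or.inr hbfin) h₁ (Or.inr hfin)

end phiI

section phiI2
variable {N₀ N₁ : EuclideanSpace 𝕜 (Fin n) → ℝ} {r s : ℝ}

theorem phiI_smul_real (hN₁ : IsNorm N₁) (hr : 0 ≤ r) (hs : 0 ≤ s) (hrs : r + s = 1)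
    {t : ℝ} (ht : 0 < t) (w : EuclideanSpace 𝕜 (Fin n)) :
    phiI N₀ N₁ r s (t • w) = ENNReal.ofReal t * phiI N₀ N₁ r s w := by
  have h1 : edual (fun u => ENNReal.ofReal (N₀ u)) (t • w)
      = ENNReal.ofReal t * edual (fun u => ENNReal.ofReal (N₀ u)) w := by
    rw [edual_smul_real, abs_of_pos ht]
  have h2 : ENNReal.ofReal (N₁ (t • w)) = ENNReal.ofReal t * ENNReal.ofReal (N₁ w) := by
    rw [hN₁.smul_real, abs_of_pos ht, ENNReal.ofReal_mul ht.le]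
  have ht0 : ENNReal.ofReal t ≠ 0 := by simp [ht]
  rw [phiI, h1, h2, ENNReal.mul_rpow_of_nonneg _ _ hr, ENNReal.mul_rpow_of_nonneg _ _ hs]
  rw [phiI]
  calc ENNReal.ofReal t ^ r * edual (fun u => ENNReal.ofReal (N₀ u)) w ^ r *
        (ENNReal.ofReal t ^ s * ENNReal.ofReal (N₁ w) ^ s)
      = (ENNReal.ofReal t ^ r * ENNReal.ofReal t ^ s) *
        (edual (fun u => ENNReal.ofReal (N₀ u)) w ^ r * ENNReal.ofReal (N₁ w) ^ s) := by ring
    _ = ENNReal.ofReal t * (edual (fun u => ENNReal.ofReal (N₀ u)) w ^ r *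
        ENNReal.ofReal (N₁ w) ^ s) := by
        rw [← ENNReal.rpow_add r s ht0 ENNReal.ofReal_ne_top, hrs, ENNReal.rpow_one]

theorem phiI_unimodular (hN₁ : IsNorm N₁) (hr : 0 ≤ r) (hs : 0 ≤ s) (hrs : r + s = 1)
    {c : 𝕜} (hc : ‖c‖ = 1) (w : EuclideanSpace 𝕜 (Fin n)) :
    phiI N₀ N₁ r s (c • w) = phiI N₀ N₁ r s w := by
  have hc1 : (‖c‖₊ : ℝ≥0∞) = 1 := by
    rw [← ofReal_norm_eq_coe_nnnorm, hc, ENNReal.ofReal_one]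
  have h1 : edual (fun u => ENNReal.ofReal (N₀ u)) (c • w)
      = edual (fun u => ENNReal.ofReal (N₀ u)) w := by
    rw [edual_smul, hc1, one_mul]
  have h2 : ENNReal.ofReal (N₁ (c • w)) = ENNReal.ofReal (N₁ w) := by
    rw [hN₁.2.1, hc, one_mul]
  rw [phiI, h1, h2, phiI]

end phiI2

/-- The `σ` functional: the dual of `phiI`. -/
noncomputable def sigmaI (N₀ N₁ : EuclideanSpace 𝕜 (Fin n) → ℝ) (r s : ℝ) :
    EuclideanSpace 𝕜 (Fin n) → ℝ≥0∞ :=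
  edual (phiI N₀ N₁ r s)

/-- The polar description of the interpolation body. -/
def polarBody (N₀ N₁ : EuclideanSpace 𝕜 (Fin n) → ℝ) (r s : ℝ) :
    Set (EuclideanSpace 𝕜 (Fin n)) :=
  {u | ∀ v : EuclideanSpace 𝕜 (Fin n), v ≠ 0 →
    (‖(inner 𝕜 v u : 𝕜)‖₊ : ℝ≥0∞) ≤ sigmaI N₀ N₁ r s v}

section bipolar
variable {N₀ N₁ : EuclideanSpace 𝕜 (Fin n) → ℝ} {r s : ℝ}

/-- Elements of `S` pair against `σ`. -/
theorem mem_S_pairing {w : EuclideanSpace 𝕜 (Fin n)} (hw : phiI N₀ N₁ r s w ≤ 1)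
    (v : EuclideanSpace 𝕜 (Fin n)) :
    (‖(inner 𝕜 v w : 𝕜)‖₊ : ℝ≥0∞) ≤ sigmaI N₀ N₁ r s v := by
  rcases eq_or_ne w 0 with rfl | hw0
  · simp
  · have h1 : (‖(inner 𝕜 w v : 𝕜)‖₊ : ℝ≥0∞) / phiI N₀ N₁ r s w ≤ sigmaI N₀ N₁ r s v :=
      le_edual hw0 v
    have h2 : (‖(inner 𝕜 v w : 𝕜)‖₊ : ℝ≥0∞) = ‖(inner 𝕜 w v : 𝕜)‖₊ := by
      congr 1
      apply NNReal.coe_injective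
      exact norm_inner_symm v w
    rw [h2]
    refine le_trans ?_ h1
    calc (‖(inner 𝕜 w v : 𝕜)‖₊ : ℝ≥0∞) = (‖(inner 𝕜 w v : 𝕜)‖₊ : ℝ≥0∞) / 1 := (div_one _).symm
      _ ≤ (‖(inner 𝕜 w v : 𝕜)‖₊ : ℝ≥0∞) / phiI N₀ N₁ r s w := by
          exact ENNReal.div_le_div le_rfl hw

/-- If `z` pairs boundedly against `S`, then `σ z` is bounded. -/
theorem sigmaI_le_of_bound (hN₀ : IsNorm N₀) (hN₁ : IsNorm N₁)
    (hr : 0 ≤ r) (hs : 0 ≤ s) (hrs : r + s = 1)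
    {z : EuclideanSpace 𝕜 (Fin n)} {α : ℝ}
    (hb : ∀ w : EuclideanSpace 𝕜 (Fin n), phiI N₀ N₁ r s w ≤ 1 →
      ‖(inner 𝕜 z w : 𝕜)‖ ≤ α) :
    sigmaI N₀ N₁ r s z ≤ ENNReal.ofReal α := by
  have hgood : Good (phiI N₀ N₁ r s) := phiI_good hN₀ hN₁ hr hs hrs
  have hα : 0 ≤ α := by
    have := hb 0 (by rw [phiI_zero hN₀ hN₁ hr hs hrs]; exact zero_le_one)
    simpa using this
  refine iSup_le fun ⟨w, hw⟩ => ?_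
  have hφpos : 0 < (phiI N₀ N₁ r s w).toReal :=
    ENNReal.toReal_pos (hgood.ne_zero hw) (hgood.ne_top w)
  set t : ℝ := (phiI N₀ N₁ r s w).toReal with htdef
  have hφt : phiI N₀ N₁ r s w = ENNReal.ofReal t := (ENNReal.ofReal_toReal (hgood.ne_top w)).symm
  have hmem : phiI N₀ N₁ r s (t⁻¹ • w) ≤ 1 := by
    rw [phiI_smul_real hN₁ hr hs hrs (inv_pos.2 hφpos) w, hφt,
      ← ENNReal.ofReal_mul (inv_pos.2 hφpos).le, inv_mul_cancel₀ hφpos.ne', ENNReal.ofReal_one]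
  have hpair := hb _ hmem
  have hinner : ‖(inner 𝕜 z (t⁻¹ • w) : 𝕜)‖ = t⁻¹ * ‖(inner 𝕜 z w : 𝕜)‖ := by
    rw [RCLike.real_smul_eq_coe_smul (K := 𝕜), inner_smul_right]
    rw [norm_mul, RCLike.norm_ofReal, abs_of_pos (inv_pos.2 hφpos)]
  rw [hinner] at hpair
  have hkey : ‖(inner 𝕜 z w : 𝕜)‖ ≤ α * t := by
    have := mul_le_mul_of_nonneg_right hpair hφpos.le
    rw [mul_comm t⁻¹ _, mul_assoc, inv_mul_cancel₀ hφpos.ne', mul_one] at this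
    exact this
  have h2 : (‖(inner 𝕜 w z : 𝕜)‖₊ : ℝ≥0∞) = ENNReal.ofReal ‖(inner 𝕜 z w : 𝕜)‖ := by
    rw [ofReal_norm_eq_coe_nnnorm]
    congr 1
    apply NNReal.coe_injective
    exact norm_inner_symm w z
  rw [ENNReal.div_le_iff (hgood.ne_zero hw) (hgood.ne_top w), hφt, h2,
    ← ENNReal.ofReal_mul hα]
  exact ENNReal.ofReal_le_ofReal hkey

/-- The polar body belongs to the defining family of `convK`. -/
theorem polarBody_mem_family (hN₀ : IsNorm N₀) (hN₁ : IsNorm N₁)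
    (hr : 0 ≤ r) (hs : 0 ≤ s) (hrs : r + s = 1) :
    IsClosed (polarBody N₀ N₁ r s) ∧ Convex ℝ (polarBody N₀ N₁ r s) ∧
      SymmSet 𝕜 (polarBody N₀ N₁ r s) ∧
      {w | phiI N₀ N₁ r s w ≤ 1} ⊆ polarBody N₀ N₁ r s := by
  have hgood : Good (sigmaI N₀ N₁ r s) := edual_good (phiI_good hN₀ hN₁ hr hs hrs)
  have hrw : polarBody N₀ N₁ r s = ⋂ (v : EuclideanSpace 𝕜 (Fin n)) (_ : v ≠ 0),
      {u | ‖(inner 𝕜 v u : 𝕜)‖ ≤ (sigmaI N₀ N₁ r s v).toReal} := by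
    ext u
    simp only [polarBody, Set.mem_setOf_eq, Set.mem_iInter]
    refine forall_congr' fun v => forall_congr' fun hv => ?_
    rw [← ofReal_norm_eq_coe_nnnorm, ENNReal.ofReal_le_iff_le_toReal (hgood.ne_top v)]
  refine ⟨?_, ?_, ?_, ?_⟩
  · rw [hrw]
    refine isClosed_iInter fun v => isClosed_iInter fun _ => ?_
    exact isClosed_le (Continuous.norm (Continuous.inner continuous_const continuous_id))
      continuous_const
  · rw [hrw]
    refine convex_iInter fun v => convex_iInter fun _ => ?_
    intro u₁ h₁ u₂ h₂ a b ha hb hab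
    simp only [Set.mem_setOf_eq] at h₁ h₂ ⊢
    have : (inner 𝕜 v (a • u₁ + b • u₂) : 𝕜) = (a:𝕜) * inner 𝕜 v u₁ + (b:𝕜) * inner 𝕜 v u₂ := by
      rw [inner_add_right, RCLike.real_smul_eq_coe_smul (K := 𝕜) a,
        RCLike.real_smul_eq_coe_smul (K := 𝕜) b, inner_smul_right, inner_smul_right]
    rw [this]
    calc ‖(a:𝕜) * inner 𝕜 v u₁ + (b:𝕜) * inner 𝕜 v u₂‖
        ≤ ‖(a:𝕜) * (inner 𝕜 v u₁ : 𝕜)‖ + ‖(b:𝕜) * (inner 𝕜 v u₂ : 𝕜)‖ := norm_add_le _ _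
      _ = a * ‖(inner 𝕜 v u₁ : 𝕜)‖ + b * ‖(inner 𝕜 v u₂ : 𝕜)‖ := by
          rw [norm_mul, norm_mul, RCLike.norm_ofReal, RCLike.norm_ofReal,
            abs_of_nonneg ha, abs_of_nonneg hb]
      _ ≤ a * (sigmaI N₀ N₁ r s v).toReal + b * (sigmaI N₀ N₁ r s v).toReal := by
          gcongr
      _ = (sigmaI N₀ N₁ r s v).toReal := by rw [← add_mul, hab, one_mul]
  · intro c hc u hu
    simp only [polarBody, Set.mem_setOf_eq] at hu ⊢
    intro v hv
    have h1 : (inner 𝕜 v (c • u) : 𝕜) = c * inner 𝕜 v u := inner_smul_right _ _ _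
    have h2 : (‖(inner 𝕜 v (c • u) : 𝕜)‖₊ : ℝ≥0∞) = ‖(inner 𝕜 v u : 𝕜)‖₊ := by
      rw [h1, nnnorm_mul]
      have h3 : ‖c‖₊ = 1 := by apply NNReal.coe_injective; simpa using hc
      rw [h3, one_mul]
    rw [h2]
    exact hu v hv
  · intro w hw v hv
    exact mem_S_pairing hw v

end bipolar

section convKlemmas
variable {S : Set (EuclideanSpace 𝕜 (Fin n))}

theorem subset_convK : S ⊆ convK 𝕜 S := fun x hx =>
  Set.mem_sInter.2 fun _ hK => hK.2.2.2 hx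

theorem convK_closed : IsClosed (convK 𝕜 S) :=
  isClosed_sInter fun _ hK => hK.1

theorem convK_convex : Convex ℝ (convK 𝕜 S) :=
  convex_sInter fun _ hK => hK.2.1

theorem convK_symm : SymmSet 𝕜 (convK 𝕜 S) := fun c hc x hx =>
  Set.mem_sInter.2 fun K hK => hK.2.2.1 c hc x (Set.mem_sInter.1 hx K hK)

end convKlemmas

section bipolar2
variable {N₀ N₁ : EuclideanSpace 𝕜 (Fin n) → ℝ} {r s : ℝ}

theorem convK_eq_polarBody (hN₀ : IsNorm N₀) (hN₁ : IsNorm N₁)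
    (hr : 0 ≤ r) (hs : 0 ≤ s) (hrs : r + s = 1) :
    convK 𝕜 {w | phiI N₀ N₁ r s w ≤ 1} = polarBody N₀ N₁ r s := by
  apply Set.Subset.antisymm
  · exact Set.sInter_subset_of_mem (polarBody_mem_family hN₀ hN₁ hr hs hrs)
  · intro u₀ hu₀
    by_contra hK
    obtain ⟨f, α, hfa, hfu⟩ := RCLike.geometric_hahn_banach_closed_point (𝕜 := 𝕜)
      (convK_convex (S := {w | phiI N₀ N₁ r s w ≤ 1})) convK_closed hK
    set z := (InnerProductSpace.toDual 𝕜 (EuclideanSpace 𝕜 (Fin n))).symm f with hzdef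
    have hz : ∀ w, (inner 𝕜 z w : 𝕜) = f w := by
      intro w
      rw [← InnerProductSpace.toDual_apply_apply, hzdef,
        LinearIsometryEquiv.apply_symm_apply]
    have h0S : (0 : EuclideanSpace 𝕜 (Fin n)) ∈ convK 𝕜 {w | phiI N₀ N₁ r s w ≤ 1} :=
      subset_convK (by
        simp only [Set.mem_setOf_eq, phiI_zero hN₀ hN₁ hr hs hrs]
        exact zero_le_one)
    have hα0 : 0 < α := by
      have := hfa 0 h0S
      simpa using this
    have hb : ∀ w : EuclideanSpace 𝕜 (Fin n), phiI N₀ N₁ r s w ≤ 1 →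
        ‖(inner 𝕜 z w : 𝕜)‖ ≤ α := by
      intro w hw
      rcases eq_or_ne (inner 𝕜 z w : 𝕜) 0 with h0 | hne
      · rw [h0, norm_zero]; exact hα0.le
      · set a : 𝕜 := inner 𝕜 z w with hadef
        set c : 𝕜 := (‖a‖ : 𝕜) / a with hcdef
        have hc : ‖c‖ = 1 := by
          rw [hcdef, norm_div, RCLike.norm_ofReal, abs_of_nonneg (norm_nonneg a),
            div_self (norm_ne_zero_iff.2 hne)]
        have hmem : c • w ∈ convK 𝕜 {w | phiI N₀ N₁ r s w ≤ 1} :=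
          subset_convK (by
            simp only [Set.mem_setOf_eq, phiI_unimodular hN₁ hr hs hrs hc]
            exact hw)
        have hlt := hfa _ hmem
        have hfcw : f (c • w) = (‖a‖ : 𝕜) := by
          rw [← hz, inner_smul_right, ← hadef, hcdef, div_mul_cancel₀ _ hne]
        rw [hfcw] at hlt
        simp only [RCLike.ofReal_re] at hlt
        exact hlt.le
    have hσ := sigmaI_le_of_bound hN₀ hN₁ hr hs hrs hb
    have hz0 : z ≠ 0 := by
      intro h0
      have : f u₀ = 0 := by rw [← hz, h0, inner_zero_left]
      rw [this] at hfu
      simp at hfu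
      linarith
    have hpolar := hu₀ z hz0
    have hchain : (‖(inner 𝕜 z u₀ : 𝕜)‖₊ : ℝ≥0∞) ≤ ENNReal.ofReal α := le_trans hpolar hσ
    rw [← ofReal_norm_eq_coe_nnnorm, ENNReal.ofReal_le_ofReal_iff hα0.le] at hchain
    have hre : α < ‖(inner 𝕜 z u₀ : 𝕜)‖ := by
      calc α < RCLike.re (f u₀) := hfu
        _ ≤ ‖f u₀‖ := RCLike.re_le_norm _
        _ = ‖(inner 𝕜 z u₀ : 𝕜)‖ := by rw [hz]
    linarith

end bipolar2

section gauge
variable {N₀ N₁ : EuclideanSpace 𝕜 (Fin n) → ℝ} {r s : ℝ}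

theorem gauge_eq (hN₀ : IsNorm N₀) (hN₁ : IsNorm N₁)
    (hr : 0 ≤ r) (hs : 0 ≤ s) (hrs : r + s = 1) (u : EuclideanSpace 𝕜 (Fin n)) :
    sInf {t : ℝ | 0 < t ∧ t⁻¹ • u ∈ convK 𝕜 {w | phiI N₀ N₁ r s w ≤ 1}} =
      (edual (sigmaI N₀ N₁ r s) u).toReal := by
  have hσgood : Good (sigmaI N₀ N₁ r s) := edual_good (phiI_good hN₀ hN₁ hr hs hrs)
  have hGgood : Good (edual (sigmaI N₀ N₁ r s)) := edual_good hσgood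
  set g : ℝ≥0∞ := edual (sigmaI N₀ N₁ r s) u with hgdef
  have hgfin : g ≠ ∞ := hGgood.ne_top u
  have hset : {t : ℝ | 0 < t ∧ t⁻¹ • u ∈ convK 𝕜 {w | phiI N₀ N₁ r s w ≤ 1}} =
      {t : ℝ | 0 < t ∧ g.toReal ≤ t} := by
    ext t
    simp only [Set.mem_setOf_eq, convK_eq_polarBody hN₀ hN₁ hr hs hrs]
    refine and_congr_right fun ht => ?_
    set T : ℝ≥0∞ := ENNReal.ofReal t with hTdef
    have hT0 : T ≠ 0 := by simp [hTdef, ht]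
    have hTtop : T ≠ ∞ := ENNReal.ofReal_ne_top
    have hsmul : ∀ v : EuclideanSpace 𝕜 (Fin n),
        (‖(inner 𝕜 v (t⁻¹ • u) : 𝕜)‖₊ : ℝ≥0∞) = (‖(inner 𝕜 v u : 𝕜)‖₊ : ℝ≥0∞) / T := by
      intro v
      rw [RCLike.real_smul_eq_coe_smul (K := 𝕜), inner_smul_right, nnnorm_mul, ENNReal.coe_mul,
        ENNReal.div_eq_inv_mul]
      congr 1
      rw [← ofReal_norm_eq_coe_nnnorm, RCLike.norm_ofReal, abs_of_pos (inv_pos.2 ht),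
        ENNReal.ofReal_inv_of_pos ht]
    have hiff : (∀ v : EuclideanSpace 𝕜 (Fin n), v ≠ 0 →
        (‖(inner 𝕜 v (t⁻¹ • u) : 𝕜)‖₊ : ℝ≥0∞) ≤ sigmaI N₀ N₁ r s v) ↔ g ≤ T := by
      constructor
      · intro hall
        rw [hgdef]
        refine iSup_le fun ⟨v, hv⟩ => ?_
        have := hall v hv
        rw [hsmul v, ENNReal.div_le_iff hT0 hTtop] at this
        rw [ENNReal.div_le_iff (hσgood.ne_zero hv) (hσgood.ne_top v)]
        calc (‖(inner 𝕜 v u : 𝕜)‖₊ : ℝ≥0∞) ≤ sigmaI N₀ N₁ r s v * T := this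
          _ = T * sigmaI N₀ N₁ r s v := mul_comm _ _
      · intro hg v hv
        have h1 : (‖(inner 𝕜 v u : 𝕜)‖₊ : ℝ≥0∞) / sigmaI N₀ N₁ r s v ≤ T :=
          le_trans (le_edual hv u) hg
        rw [ENNReal.div_le_iff (hσgood.ne_zero hv) (hσgood.ne_top v)] at h1
        rw [hsmul v, ENNReal.div_le_iff hT0 hTtop]
        calc (‖(inner 𝕜 v u : 𝕜)‖₊ : ℝ≥0∞) ≤ T * sigmaI N₀ N₁ r s v := h1
          _ = sigmaI N₀ N₁ r s v * T := mul_comm _ _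
    simp only [polarBody, Set.mem_setOf_eq]
    rw [hiff, hTdef, ENNReal.le_ofReal_iff_toReal_le hgfin ht.le]
  rw [hset]
  rcases (ENNReal.toReal_nonneg (a := g)).eq_or_lt with h0 | hpos
  · have : {t : ℝ | 0 < t ∧ g.toReal ≤ t} = Set.Ioi 0 := by
      ext t
      simp only [Set.mem_setOf_eq, Set.mem_Ioi]
      exact ⟨fun h => h.1, fun h => ⟨h, by rw [← h0]; exact h.le⟩⟩
    rw [this, csInf_Ioi, ← h0]
  · have : {t : ℝ | 0 < t ∧ g.toReal ≤ t} = Set.Ici g.toReal := by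
      ext t
      simp only [Set.mem_setOf_eq, Set.mem_Ici]
      exact ⟨fun h => h.2, fun h => ⟨lt_of_lt_of_le hpos h, h⟩⟩
    rw [this, csInf_Ici]

end gauge

section final
variable {N₀ N₁ : EuclideanSpace 𝕜 (Fin n) → ℝ} {r s : ℝ}

/-- Hölder-type bound: `σ ≤ ρ₀^r · (ρ₁*)^s`. -/
theorem sigmaI_le_psi (hN₀ : IsNorm N₀) (hN₁ : IsNorm N₁)
    (hr : 0 ≤ r) (hs : 0 ≤ s) (hrs : r + s = 1) (v : EuclideanSpace 𝕜 (Fin n)) :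
    sigmaI N₀ N₁ r s v ≤
      (ENNReal.ofReal (N₀ v)) ^ r * (edual (fun u => ENNReal.ofReal (N₁ u)) v) ^ s := by
  rcases eq_or_ne v 0 with rfl | hv
  · obtain ⟨C, -, hup⟩ := (edual_good (phiI_good hN₀ hN₁ hr hs hrs)).2
    have : sigmaI N₀ N₁ r s 0 = 0 := le_antisymm (by simpa [sigmaI] using hup 0) (zero_le')
    rw [this]; exact zero_le'
  refine iSup_le fun ⟨w, hw⟩ => ?_
  have hφgood : Good (phiI N₀ N₁ r s) := phiI_good hN₀ hN₁ hr hs hrs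
  set X : ℝ≥0∞ := (‖(inner 𝕜 w v : 𝕜)‖₊ : ℝ≥0∞) with hXdef
  rw [ENNReal.div_le_iff (hφgood.ne_zero hw) (hφgood.ne_top w)]
  rcases eq_or_ne X 0 with hX0 | hXne
  · rw [hX0]; exact zero_le'
  have hXfin : X ≠ ∞ := coe_ne_top
  -- X ≤ D₀ w * ofReal (N₀ v)
  have ha : X ≤ edual (fun u => ENNReal.ofReal (N₀ u)) w * ENNReal.ofReal (N₀ v) := by
    have h1 := le_edual (φ := fun u => ENNReal.ofReal (N₀ u)) hv w
    rw [ENNReal.div_le_iff (by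
        simpa [ENNReal.ofReal_eq_zero, not_le] using (isNorm_good hN₀).pos hv
        ) ENNReal.ofReal_ne_top] at h1
    have hsym : X = (‖(inner 𝕜 v w : 𝕜)‖₊ : ℝ≥0∞) := by
      rw [hXdef]; congr 1; apply NNReal.coe_injective; exact norm_inner_symm w v
    rw [hsym]
    exact h1
  -- X ≤ ofReal (N₁ w) * D₁ v
  have hb : X ≤ ENNReal.ofReal (N₁ w) * edual (fun u => ENNReal.ofReal (N₁ u)) v := by
    have h1 := le_edual (φ := fun u => ENNReal.ofReal (N₁ u)) hw v
    rw [ENNReal.div_le_iff (by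
        simpa [ENNReal.ofReal_eq_zero, not_le] using (isNorm_good hN₁).pos hw
        ) ENNReal.ofReal_ne_top] at h1
    exact h1.trans_eq (mul_comm _ _)
  calc X = X ^ r * X ^ s := by
        rw [← ENNReal.rpow_add r s hXne hXfin, hrs, ENNReal.rpow_one]
    _ ≤ (edual (fun u => ENNReal.ofReal (N₀ u)) w * ENNReal.ofReal (N₀ v)) ^ r *
        (ENNReal.ofReal (N₁ w) * edual (fun u => ENNReal.ofReal (N₁ u)) v) ^ s := by
        exact mul_le_mul' (ENNReal.rpow_le_rpow ha hr) (ENNReal.rpow_le_rpow hb hs)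
    _ = (ENNReal.ofReal (N₀ v)) ^ r * (edual (fun u => ENNReal.ofReal (N₁ u)) v) ^ s *
        phiI N₀ N₁ r s w := by
        rw [ENNReal.mul_rpow_of_nonneg _ _ hr, ENNReal.mul_rpow_of_nonneg _ _ hs, phiI]
        ring

/-- Upper bound for the Minkowski functional by `φ`. -/
theorem ofReal_sInf_le_phiI (hN₀ : IsNorm N₀) (hN₁ : IsNorm N₁)
    (hr : 0 ≤ r) (hs : 0 ≤ s) (hrs : r + s = 1) (u : EuclideanSpace 𝕜 (Fin n)) :
    ENNReal.ofReal
        (sInf {t : ℝ | 0 < t ∧ t⁻¹ • u ∈ convK 𝕜 {w | phiI N₀ N₁ r s w ≤ 1}}) ≤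
      phiI N₀ N₁ r s u := by
  have hφgood : Good (phiI N₀ N₁ r s) := phiI_good hN₀ hN₁ hr hs hrs
  rcases eq_or_ne u 0 with rfl | hu
  · rw [gauge_eq hN₀ hN₁ hr hs hrs]
    obtain ⟨C, -, hup⟩ := (edual_good (edual_good hφgood)).2
    have h0 : edual (sigmaI N₀ N₁ r s) (0 : EuclideanSpace 𝕜 (Fin n)) = 0 :=
      le_antisymm (by simpa [sigmaI] using hup 0) (zero_le')
    rw [h0]
    simp
  · set t₀ : ℝ := (phiI N₀ N₁ r s u).toReal with ht₀def
    have ht₀pos : 0 < t₀ := ENNReal.toReal_pos (hφgood.ne_zero hu) (hφgood.ne_top u)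
    have hmem : t₀ ∈ {t : ℝ | 0 < t ∧ t⁻¹ • u ∈ convK 𝕜 {w | phiI N₀ N₁ r s w ≤ 1}} := by
      refine ⟨ht₀pos, subset_convK ?_⟩
      simp only [Set.mem_setOf_eq]
      rw [phiI_smul_real hN₁ hr hs hrs (inv_pos.2 ht₀pos) u]
      rw [← ENNReal.ofReal_toReal (hφgood.ne_top u), ← ht₀def,
        ← ENNReal.ofReal_mul (inv_pos.2 ht₀pos).le, inv_mul_cancel₀ ht₀pos.ne',
        ENNReal.ofReal_one]
    have hbdd : BddBelow {t : ℝ | 0 < t ∧ t⁻¹ • u ∈ convK 𝕜 {w | phiI N₀ N₁ r s w ≤ 1}} :=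
      ⟨0, fun t ht => ht.1.le⟩
    have := csInf_le hbdd hmem
    calc ENNReal.ofReal (sInf {t : ℝ | 0 < t ∧ t⁻¹ • u ∈
          convK 𝕜 {w | phiI N₀ N₁ r s w ≤ 1}}) ≤ ENNReal.ofReal t₀ :=
          ENNReal.ofReal_le_ofReal this
      _ = phiI N₀ N₁ r s u := ENNReal.ofReal_toReal (hφgood.ne_top u)

end final

theorem stmt18' (d : ℕ) (ρ₀ ρ₁ : (Fin d → ℝ) → EuclideanSpace 𝕜 (Fin n) → ℝ)
    (hρ₀ : IsNormFun d ρ₀) (hρ₁ : IsNormFun d ρ₁)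
    (C₀ C₁ : ℝ) (hA0 : NormFunA1 d ρ₀ C₀) (hA1 : NormFunA1 d ρ₁ C₁)
    (p q : ℝ≥0∞) (hp : 1 ≤ p) (hpq : p⁻¹ + q⁻¹ = 1) :
    IsNormFun d (interpNormFun d ρ₀ ρ₁ p q) ∧
    (∀ x u, ENNReal.ofReal (interpNormFun d ρ₀ ρ₁ p q x u) ≤
      (dualNormFun d ρ₀ x u) ^ (q⁻¹.toReal) * (ENNReal.ofReal (ρ₁ x u)) ^ (p⁻¹.toReal)) ∧
    (∀ x v, dualNormFun d (interpNormFun d ρ₀ ρ₁ p q) x v ≤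
      (ENNReal.ofReal (ρ₀ x v)) ^ (q⁻¹.toReal) * (dualNormFun d ρ₁ x v) ^ (p⁻¹.toReal)) := by
  set r : ℝ := q⁻¹.toReal with hrdef
  set s : ℝ := p⁻¹.toReal with hsdef
  have hr : 0 ≤ r := ENNReal.toReal_nonneg
  have hs : 0 ≤ s := ENNReal.toReal_nonneg
  have hqfin : q⁻¹ ≠ ∞ := by
    intro h
    rw [h] at hpq
    simp at hpq
  have hpfin : p⁻¹ ≠ ∞ := by
    intro h
    rw [h] at hpq
    simp at hpq
  have hrs : r + s = 1 := by
    have h1 : (p⁻¹ + q⁻¹).toReal = s + r := ENNReal.toReal_add hpfin hqfin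
    rw [hpq] at h1
    simp at h1
    linarith
  have hNx0 : ∀ x, IsNorm (ρ₀ x) := fun x => hρ₀.2 x
  have hNx1 : ∀ x, IsNorm (ρ₁ x) := fun x => hρ₁.2 x
  have hid : ∀ x u, interpNormFun d ρ₀ ρ₁ p q x u
      = (edual (sigmaI (ρ₀ x) (ρ₁ x) r s) u).toReal := fun x u =>
    gauge_eq (hNx0 x) (hNx1 x) hr hs hrs u
  have hφgood : ∀ x, Good (phiI (ρ₀ x) (ρ₁ x) r s) := fun x =>
    phiI_good (hNx0 x) (hNx1 x) hr hs hrs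
  have hσgood : ∀ x, Good (sigmaI (ρ₀ x) (ρ₁ x) r s) := fun x => edual_good (hφgood x)
  have hGgood : ∀ x, Good (edual (sigmaI (ρ₀ x) (ρ₁ x) r s)) := fun x =>
    edual_good (hσgood x)
  refine ⟨⟨?_, ?_⟩, ?_, ?_⟩
  · -- measurability
    intro u
    have hmeas₀ : ∀ w, Measurable fun x => edual (fun u => ENNReal.ofReal (ρ₀ x u)) w :=
      measurable_edual _ (fun w => (hρ₀.1 w).ennreal_ofReal)
        (fun x => isNorm_good (hNx0 x))
        (fun x w hw => (ENNReal.continuous_ofReal.comp (hNx0 x).continuous).continuousAt)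
    have hmeasφ : ∀ w, Measurable fun x => phiI (ρ₀ x) (ρ₁ x) r s w := fun w =>
      ((ENNReal.continuous_rpow_const (y := r)).measurable.comp (hmeas₀ w)).mul
        ((ENNReal.continuous_rpow_const (y := s)).measurable.comp
          ((hρ₁.1 w).ennreal_ofReal))
    have hmeasσ : ∀ v, Measurable fun x => sigmaI (ρ₀ x) (ρ₁ x) r s v :=
      measurable_edual (fun x => phiI (ρ₀ x) (ρ₁ x) r s) hmeasφ hφgood
        (fun x w hw => phiI_continuousAt (hNx0 x) (hNx1 x) hr hs hrs hw)
    have hmeasG : Measurable fun x => edual (sigmaI (ρ₀ x) (ρ₁ x) r s) u :=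
      measurable_edual (fun x => sigmaI (ρ₀ x) (ρ₁ x) r s) hmeasσ hσgood
        (fun x w hw => (edual_continuous (hφgood x)).continuousAt) u
    have : (fun x => interpNormFun d ρ₀ ρ₁ p q x u)
        = fun x => (edual (sigmaI (ρ₀ x) (ρ₁ x) r s) u).toReal := funext fun x => hid x u
    rw [this]
    exact hmeasG.ennreal_toReal
  · -- norm axioms
    intro x
    refine ⟨?_, ?_, ?_⟩
    · intro u v
      rw [hid x u, hid x v, hid x (u + v)]
      have h1 := edual_add_le (φ := sigmaI (ρ₀ x) (ρ₁ x) r s) u v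
      have hfin : edual (sigmaI (ρ₀ x) (ρ₁ x) r s) u + edual (sigmaI (ρ₀ x) (ρ₁ x) r s) v
          ≠ ∞ := ENNReal.add_ne_top.2 ⟨(hGgood x).ne_top u, (hGgood x).ne_top v⟩
      have h2 := ENNReal.toReal_mono hfin h1
      rwa [ENNReal.toReal_add ((hGgood x).ne_top u) ((hGgood x).ne_top v)] at h2
    · intro c u
      rw [hid x u, hid x (c • u), edual_smul, ENNReal.toReal_mul]
      simp
    · intro u h0
      by_contra hu
      have h1 : edual (sigmaI (ρ₀ x) (ρ₁ x) r s) u = 0 := by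
        rw [hid] at h0
        exact (ENNReal.toReal_eq_zero_iff _).1 h0 |>.resolve_right ((hGgood x).ne_top u)
      exact (hGgood x).ne_zero hu h1
  · -- claim (2)
    intro x u
    exact ofReal_sInf_le_phiI (hNx0 x) (hNx1 x) hr hs hrs u
  · -- claim (3)
    intro x v
    have step1 : dualNormFun d (interpNormFun d ρ₀ ρ₁ p q) x v
        ≤ sigmaI (ρ₀ x) (ρ₁ x) r s v := by
      refine iSup_le fun ⟨u, hu⟩ => ?_
      have hG : ENNReal.ofReal (interpNormFun d ρ₀ ρ₁ p q x u)
          = edual (sigmaI (ρ₀ x) (ρ₁ x) r s) u := by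
        rw [hid]
        exact ENNReal.ofReal_toReal ((hGgood x).ne_top u)
      show (‖(inner 𝕜 u v : 𝕜)‖₊ : ℝ≥0∞) / ENNReal.ofReal (interpNormFun d ρ₀ ρ₁ p q x u)
          ≤ sigmaI (ρ₀ x) (ρ₁ x) r s v
      rw [hG, ENNReal.div_le_iff ((hGgood x).ne_zero hu) ((hGgood x).ne_top u)]
      have hpair := pairing_le (hσgood x) v u
      have hsym : (‖(inner 𝕜 u v : 𝕜)‖₊ : ℝ≥0∞) = ‖(inner 𝕜 v u : 𝕜)‖₊ := by
        congr 1; apply NNReal.coe_injective; exact norm_inner_symm u v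
      rw [hsym]
      exact hpair
    exact step1.trans (sigmaI_le_psi (hNx0 x) (hNx1 x) hr hs hrs v)

/-- **interpolation of `A₁` norm functions.** Let `ρ₀, ρ₁` be norm functions on
`ℝᵈ × 𝔽ⁿ` in the `A₁` class with constants `C₀, C₁`, and let `1 ≤ p ≤ ∞` with conjugate
exponent `q = p'`.  Then the Minkowski functional `ρ` of the pointwise convex hull of
`{u : ρ₀*(x,u)^{1/p'} ρ₁(x,u)^{1/p} ≤ 1}` is a norm function satisfying
`ρ(x,u) ≤ ρ₀*(x,u)^{1/p'} ρ₁(x,u)^{1/p}` and `ρ*(x,v) ≤ ρ₀(x,v)^{1/p'} ρ₁*(x,v)^{1/p}`. -/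
theorem stmt18 (d : ℕ) (ρ₀ ρ₁ : (Fin d → ℝ) → EuclideanSpace 𝕜 (Fin n) → ℝ)
    (hρ₀ : IsNormFun d ρ₀) (hρ₁ : IsNormFun d ρ₁)
    (C₀ C₁ : ℝ) (hA0 : NormFunA1 d ρ₀ C₀) (hA1 : NormFunA1 d ρ₁ C₁)
    (p q : ℝ≥0∞) (hp : 1 ≤ p) (hpq : p⁻¹ + q⁻¹ = 1) :
    IsNormFun d (interpNormFun d ρ₀ ρ₁ p q) ∧
    (∀ x u, ENNReal.ofReal (interpNormFun d ρ₀ ρ₁ p q x u) ≤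
      (dualNormFun d ρ₀ x u) ^ (q⁻¹.toReal) * (ENNReal.ofReal (ρ₁ x u)) ^ (p⁻¹.toReal)) ∧
    (∀ x v, dualNormFun d (interpNormFun d ρ₀ ρ₁ p q) x v ≤
      (ENNReal.ofReal (ρ₀ x v)) ^ (q⁻¹.toReal) * (dualNormFun d ρ₁ x v) ^ (p⁻¹.toReal)) :=
  stmt18' d ρ₀ ρ₁ hρ₀ hρ₁ C₀ C₁ hA0 hA1 p q hp hpq
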